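/- Let K be a subgroup of a group G with left-orderable K, and suppose the set of left cosets G/K carries a circular order invariant under the left G-action. Then G admits a left-invariant circular order. -/

import Mathlib

/-- A circular order (as a set) on `G`: a cocycle `c : G³ → {-1,0,1}`
vanishing exactly on degenerate triples and satisfying the 2-cocycle identity. -/
def IsCircularOrder {G : Type*} (c : G → G → G → ℤ) : Prop :=
  (∀ x y z : G, c x y z = -1 ∨ c x y z = 0 ∨ c x y z = 1) ∧
  (∀ x y z : G, c x y z = 0 ↔ (x = y ∨ y = z ∨ x = z)) ∧
  (∀ g₀ g₁ g₂ g₃ : G, c g₁ g₂ g₃ - c g₀ g₂ g₃ + c g₀ g₁ g₃ - c g₀ g₁ g₂ = 0)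

/-- Invariance of a circular order under left multiplication. -/
def IsLeftInvariant {G : Type*} [Group G] (c : G → G → G → ℤ) : Prop :=
  ∀ g x y z : G, c (g * x) (g * y) (g * z) = c x y z

/-- A left-invariant linear order on a group `G`: a strict total order
invariant under left multiplication. -/
def IsLeftInvariantLinearOrder {G : Type*} [Group G] (lt : G → G → Prop) : Prop :=
  IsStrictTotalOrder G lt ∧ ∀ f a b : G, lt a b → lt (f * a) (f * b)

/-- If `K ≤ G` is left-orderable and the coset space `G/K` carries a `G`-invariant
circular order, then `G` admits a left-invariant circular order. -/
theorem circularlyOrderable_of_leftOrderable_stabilizer {G : Type*} [Group G]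
    (K : Subgroup G)
    (hK : ∃ lt : K → K → Prop, IsLeftInvariantLinearOrder lt)
    (hQ : ∃ cQ : G ⧸ K → G ⧸ K → G ⧸ K → ℤ, IsCircularOrder cQ ∧
      ∀ (g : G) (x y z : G ⧸ K), cQ (g • x) (g • y) (g • z) = cQ x y z) :
    ∃ c : G → G → G → ℤ, IsCircularOrder c ∧ IsLeftInvariant c := by
  classical
  obtain ⟨lt, hSTO, hInv⟩ := hK
  obtain ⟨cQ, ⟨hRange, hZero, hCocycle⟩, hQinv⟩ := hQ
  have htri : ∀ a b : K, lt a b ∨ a = b ∨ lt b a := fun a b => by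
    by_cases h1 : lt a b
    · exact Or.inl h1
    · by_cases h2 : lt b a
      · exact Or.inr (Or.inr h2)
      · exact Or.inr (Or.inl (hSTO.trichotomous a b h1 h2))
  have hirr : ∀ a : K, ¬ lt a a := hSTO.irrefl
  have htrans : ∀ a b c : K, lt a b → lt b c → lt a c := fun a b c => hSTO.trans a b c
  -- the sign function on K
  set sgn : K → ℤ := fun k => if lt 1 k then 1 else if lt k 1 then -1 else 0 with hsgn
  have hexcl : ∀ k : K, lt 1 k → lt k 1 → False := fun k h1 h2 => hirr 1 (htrans _ _ _ h1 h2)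
  have hsgn_pos : ∀ k, lt 1 k → sgn k = 1 := fun k h => if_pos h
  have hsgn_neg : ∀ k, lt k 1 → sgn k = -1 := by
    intro k h
    simp only [hsgn]
    rw [if_neg (fun h' => hexcl k h' h), if_pos h]
  have hsgn_one : sgn 1 = 0 := by
    simp only [hsgn]
    rw [if_neg (hirr 1), if_neg (hirr 1)]
  have hsgn_range : ∀ k, sgn k = -1 ∨ sgn k = 0 ∨ sgn k = 1 := by
    intro k
    simp only [hsgn]
    split_ifs <;> simp
  have hsgn_ne : ∀ k : K, k ≠ 1 → sgn k ≠ 0 := by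
    intro k hk
    rcases htri 1 k with h | h | h
    · rw [hsgn_pos k h]; decide
    · exact absurd h.symm hk
    · rw [hsgn_neg k h]; decide
  have hsgn_inv : ∀ k : K, sgn k⁻¹ = -sgn k := by
    intro k
    rcases htri 1 k with h | h | h
    · have h' : lt k⁻¹ 1 := by simpa using hInv k⁻¹ 1 k h
      rw [hsgn_pos k h, hsgn_neg _ h']
    · rw [← h]; simp [hsgn_one]
    · have h' : lt 1 k⁻¹ := by simpa using hInv k⁻¹ k 1 h
      rw [hsgn_neg k h, hsgn_pos _ h']; norm_num
  have hpos_mul : ∀ a b : K, lt 1 a → lt 1 b → lt 1 (a*b) := by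
    intro a b ha hb
    have := hInv a 1 b hb
    simp only [mul_one] at this
    exact htrans _ _ _ ha this
  have hneg_mul : ∀ a b : K, lt a 1 → lt b 1 → lt (a*b) 1 := by
    intro a b ha hb
    have := hInv a b 1 hb
    simp only [mul_one] at this
    exact htrans _ _ _ this ha
  -- the key identity
  have hkey : ∀ a b : K, sgn b - sgn (a*b) + sgn a = sgn a * sgn b * sgn (a*b) := by
    intro a b
    rcases htri 1 a with ha | ha | ha
    · rcases htri 1 b with hb | hb | hb
      · rw [hsgn_pos a ha, hsgn_pos b hb, hsgn_pos _ (hpos_mul a b ha hb)]; ring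
      · rw [← hb, mul_one, hsgn_one]; ring
      · rw [hsgn_pos a ha, hsgn_neg b hb]; ring
    · rw [← ha, one_mul, hsgn_one]; ring
    · rcases htri 1 b with hb | hb | hb
      · rw [hsgn_neg a ha, hsgn_pos b hb]; ring
      · rw [← hb, mul_one, hsgn_one]; ring
      · rw [hsgn_neg a ha, hsgn_neg b hb, hsgn_neg _ (hneg_mul a b ha hb)]; ring
  -- the relative sign function on G
  set f : G → G → ℤ := fun x y => if h : x⁻¹ * y ∈ K then sgn ⟨x⁻¹ * y, h⟩ else 0 with hf
  have hf_mem : ∀ (x y : G) (h : x⁻¹ * y ∈ K), f x y = sgn ⟨x⁻¹ * y, h⟩ := by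
    intro x y h; simp only [hf]; rw [dif_pos h]
  have hf_nmem : ∀ (x y : G), x⁻¹ * y ∉ K → f x y = 0 := by
    intro x y h; simp only [hf]; rw [dif_neg h]
  have hf_self : ∀ x : G, f x x = 0 := by
    intro x
    have h : x⁻¹ * x ∈ K := by simpa using one_mem K
    rw [hf_mem x x h]
    have : (⟨x⁻¹ * x, h⟩ : K) = 1 := by ext; simp
    rw [this, hsgn_one]
  have hf_anti : ∀ x y : G, f y x = -f x y := by
    intro x y
    by_cases h : x⁻¹ * y ∈ K
    · have h' : y⁻¹ * x ∈ K := by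
        have := inv_mem h; simpa [mul_inv_rev] using this
      rw [hf_mem x y h, hf_mem y x h']
      have : (⟨y⁻¹ * x, h'⟩ : K) = (⟨x⁻¹ * y, h⟩ : K)⁻¹ := by ext; simp [mul_inv_rev]
      rw [this, hsgn_inv]
    · have h' : y⁻¹ * x ∉ K := fun hc => h (by simpa [mul_inv_rev] using inv_mem hc)
      rw [hf_nmem x y h, hf_nmem y x h']; norm_num
  have hcoset : ∀ x y : G, (↑x : G ⧸ K) = ↑y ↔ x⁻¹ * y ∈ K := fun x y => QuotientGroup.eq
  have hf_ne : ∀ x y : G, (↑x : G ⧸ K) ≠ ↑y → f x y = 0 := by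
    intro x y h
    exact hf_nmem x y (fun hc => h ((hcoset x y).2 hc))
  -- the circular order on G
  refine ⟨fun x y z => cQ ↑x ↑y ↑z + f y z - f x z + f x y, ⟨?_, ?_, ?_⟩, ?_⟩
  · -- range
    intro x y z
    dsimp only
    by_cases hxy : (↑x : G ⧸ K) = ↑y
    · have hQ0 : cQ ↑x ↑y ↑z = 0 := (hZero _ _ _).2 (Or.inl hxy)
      by_cases hyz : (↑y : G ⧸ K) = ↑z
      · -- all in the same coset
        have hxz : (↑x : G ⧸ K) = ↑z := hxy.trans hyz
        have ha : x⁻¹ * y ∈ K := (hcoset x y).1 hxy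
        have hb : y⁻¹ * z ∈ K := (hcoset y z).1 hyz
        have hc : x⁻¹ * z ∈ K := (hcoset x z).1 hxz
        have hab : (⟨x⁻¹ * z, hc⟩ : K) = ⟨x⁻¹ * y, ha⟩ * ⟨y⁻¹ * z, hb⟩ := by
          ext; simp [mul_assoc]
        rw [hQ0, hf_mem x y ha, hf_mem y z hb, hf_mem x z hc, hab]
        rw [show (0 : ℤ) + sgn ⟨y⁻¹ * z, hb⟩ - sgn (⟨x⁻¹ * y, ha⟩ * ⟨y⁻¹ * z, hb⟩)
            + sgn ⟨x⁻¹ * y, ha⟩ = sgn ⟨y⁻¹ * z, hb⟩ - sgn (⟨x⁻¹ * y, ha⟩ * ⟨y⁻¹ * z, hb⟩)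
            + sgn ⟨x⁻¹ * y, ha⟩ from by ring, hkey]
        rcases hsgn_range ⟨x⁻¹ * y, ha⟩ with h1 | h1 | h1 <;>
          rcases hsgn_range ⟨y⁻¹ * z, hb⟩ with h2 | h2 | h2 <;>
          rcases hsgn_range (⟨x⁻¹ * y, ha⟩ * ⟨y⁻¹ * z, hb⟩) with h3 | h3 | h3 <;>
          rw [h1, h2, h3] <;> norm_num
      · have hxz : (↑x : G ⧸ K) ≠ ↑z := fun hc => hyz (hxy.symm.trans hc)
        have ha : x⁻¹ * y ∈ K := (hcoset x y).1 hxy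
        rw [hQ0, hf_ne y z hyz, hf_ne x z hxz, hf_mem x y ha]
        rcases hsgn_range ⟨x⁻¹ * y, ha⟩ with h | h | h <;> rw [h] <;> norm_num
    · by_cases hyz : (↑y : G ⧸ K) = ↑z
      · have hxz : (↑x : G ⧸ K) ≠ ↑z := fun hc => hxy (hc.trans hyz.symm)
        have hQ0 : cQ ↑x ↑y ↑z = 0 := (hZero _ _ _).2 (Or.inr (Or.inl hyz))
        rw [hQ0, hf_ne x z hxz, hf_ne x y hxy]
        have hm : y⁻¹ * z ∈ K := (hcoset y z).1 hyz
        rw [hf_mem y z hm]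
        rcases hsgn_range ⟨y⁻¹ * z, hm⟩ with h | h | h <;> rw [h] <;> norm_num
      · by_cases hxz : (↑x : G ⧸ K) = ↑z
        · have hQ0 : cQ ↑x ↑y ↑z = 0 := (hZero _ _ _).2 (Or.inr (Or.inr hxz))
          rw [hQ0, hf_ne y z hyz, hf_ne x y hxy]
          have hm : x⁻¹ * z ∈ K := (hcoset x z).1 hxz
          rw [hf_mem x z hm]
          rcases hsgn_range ⟨x⁻¹ * z, hm⟩ with h | h | h <;> rw [h] <;> norm_num
        · rw [hf_ne x y hxy, hf_ne y z hyz, hf_ne x z hxz]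
          simpa using hRange ↑x ↑y ↑z
  · -- vanishing iff degenerate
    intro x y z
    dsimp only
    constructor
    · intro h0
      by_contra hcon
      push_neg at hcon
      obtain ⟨hxy, hyz, hxz⟩ := hcon
      by_cases qxy : (↑x : G ⧸ K) = ↑y
      · have hQ0 : cQ ↑x ↑y ↑z = 0 := (hZero _ _ _).2 (Or.inl qxy)
        have ha : x⁻¹ * y ∈ K := (hcoset x y).1 qxy
        have ha1 : (⟨x⁻¹ * y, ha⟩ : K) ≠ 1 := by
          intro hc
          exact hxy (inv_mul_eq_one.1 (congrArg Subtype.val hc))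
        by_cases qyz : (↑y : G ⧸ K) = ↑z
        · have qxz : (↑x : G ⧸ K) = ↑z := qxy.trans qyz
          have hb : y⁻¹ * z ∈ K := (hcoset y z).1 qyz
          have hc : x⁻¹ * z ∈ K := (hcoset x z).1 qxz
          have hb1 : (⟨y⁻¹ * z, hb⟩ : K) ≠ 1 := by
            intro hcc
            exact hyz (inv_mul_eq_one.1 (congrArg Subtype.val hcc))
          have hc1 : (⟨x⁻¹ * z, hc⟩ : K) ≠ 1 := by
            intro hcc
            exact hxz (inv_mul_eq_one.1 (congrArg Subtype.val hcc))
          have hab : (⟨x⁻¹ * z, hc⟩ : K) = ⟨x⁻¹ * y, ha⟩ * ⟨y⁻¹ * z, hb⟩ := by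
            ext; simp [mul_assoc]
          rw [hQ0, hf_mem x y ha, hf_mem y z hb, hf_mem x z hc, hab] at h0
          have hk := hkey ⟨x⁻¹ * y, ha⟩ ⟨y⁻¹ * z, hb⟩
          have : sgn ⟨x⁻¹ * y, ha⟩ * sgn ⟨y⁻¹ * z, hb⟩
              * sgn (⟨x⁻¹ * y, ha⟩ * ⟨y⁻¹ * z, hb⟩) = 0 := by omega
          rcases mul_eq_zero.1 this with h | h
          · rcases mul_eq_zero.1 h with h | h
            · exact hsgn_ne _ ha1 h
            · exact hsgn_ne _ hb1 h
          · rw [← hab] at h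
            exact hsgn_ne _ hc1 h
        · have qxz : (↑x : G ⧸ K) ≠ ↑z := fun hcc => qyz (qxy.symm.trans hcc)
          rw [hQ0, hf_ne y z qyz, hf_ne x z qxz, hf_mem x y ha] at h0
          exact hsgn_ne _ ha1 (by omega)
      · by_cases qyz : (↑y : G ⧸ K) = ↑z
        · have qxz : (↑x : G ⧸ K) ≠ ↑z := fun hcc => qxy (hcc.trans qyz.symm)
          have hQ0 : cQ ↑x ↑y ↑z = 0 := (hZero _ _ _).2 (Or.inr (Or.inl qyz))
          have hb : y⁻¹ * z ∈ K := (hcoset y z).1 qyz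
          have hb1 : (⟨y⁻¹ * z, hb⟩ : K) ≠ 1 := by
            intro hcc
            exact hyz (inv_mul_eq_one.1 (congrArg Subtype.val hcc))
          rw [hQ0, hf_ne x z qxz, hf_ne x y qxy, hf_mem y z hb] at h0
          exact hsgn_ne _ hb1 (by omega)
        · by_cases qxz : (↑x : G ⧸ K) = ↑z
          · have hQ0 : cQ ↑x ↑y ↑z = 0 := (hZero _ _ _).2 (Or.inr (Or.inr qxz))
            have hc : x⁻¹ * z ∈ K := (hcoset x z).1 qxz
            have hc1 : (⟨x⁻¹ * z, hc⟩ : K) ≠ 1 := by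
              intro hcc
              exact hxz (inv_mul_eq_one.1 (congrArg Subtype.val hcc))
            rw [hQ0, hf_ne y z qyz, hf_ne x y qxy, hf_mem x z hc] at h0
            exact hsgn_ne _ hc1 (by omega)
          · rw [hf_ne x y qxy, hf_ne y z qyz, hf_ne x z qxz] at h0
            have : cQ ↑x ↑y ↑z = 0 := by omega
            rcases (hZero _ _ _).1 this with h | h | h
            · exact qxy h
            · exact qyz h
            · exact qxz h
    · intro hdeg
      rcases hdeg with h | h | h
      · subst h
        have hQ0 : cQ ↑x ↑x ↑z = 0 := (hZero _ _ _).2 (Or.inl rfl)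
        rw [hQ0, hf_self]
        ring
      · subst h
        have hQ0 : cQ ↑x ↑y ↑y = 0 := (hZero _ _ _).2 (Or.inr (Or.inl rfl))
        rw [hQ0, hf_self]
        ring
      · subst h
        have hQ0 : cQ ↑x ↑y ↑x = 0 := (hZero _ _ _).2 (Or.inr (Or.inr rfl))
        rw [hQ0, hf_self, hf_anti x y]
        ring
  · -- cocycle
    intro g0 g1 g2 g3
    dsimp only
    have := hCocycle ↑g0 ↑g1 ↑g2 ↑g3
    linarith
  · -- left invariance
    intro g x y z
    dsimp only
    have hmul : ∀ a b : G, (g * a)⁻¹ * (g * b) = a⁻¹ * b := by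
      intro a b; group
    have hfg : ∀ a b : G, f (g * a) (g * b) = f a b := by
      intro a b
      simp only [hf, hmul a b]
    have hq : ∀ a : G, (↑(g * a) : G ⧸ K) = g • (↑a : G ⧸ K) := fun a => rfl
    rw [hfg, hfg, hfg, hq, hq, hq, hQinv]
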